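/- If 𝒰 ∈ 𝒫(𝒬) and 𝒱 ⊆ 𝓒 is closed, then 𝒰·𝒱 := {(A·C, D) | A ∈ 𝒰, (C,D) ∈ 𝒱} is again closed. -/

import Mathlib

variable {Q : Type*} {A : Type*}

/-- Reachability in a nondeterministic automaton: `q` is reachable from `p` reading `w`. -/
def Reach (δ : Q → A → Set Q) : Q → List A → Q → Prop
  | p, [], q => p = q
  | p, a :: w, q => ∃ r ∈ δ p a, Reach δ r w q

/-- Reachability visiting some final state along the way (possibly the endpoints). -/
def ReachF (δ : Q → A → Set Q) (Fs : Set Q) (p : Q) (w : List A) (q : Q) : Prop :=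
  ∃ u v r, w = u ++ v ∧ r ∈ Fs ∧ Reach δ p u r ∧ Reach δ r v q

/-- The relation ∼ : `w ∼ u` iff for all states `p q`, reachability and
reachability-through-final-states via `w` and via `u` coincide. -/
def Sim (δ : Q → A → Set Q) (Fs : Set Q) (w u : List A) : Prop :=
  ∀ p q : Q, (Reach δ p w q ↔ Reach δ p u q) ∧ (ReachF δ Fs p w q ↔ ReachF δ Fs p u q)

/-- The class of a word in 𝒬 = Σ⁺/∼ ⊎ {[ε]} : for a nonempty word its ∼-class,
and `[ε] = {ε}` for the empty word. -/
def wordClass (δ : Q → A → Set Q) (Fs : Set Q) (w : List A) : Set (List A) :=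
  {u | (w = [] ∧ u = []) ∨ (w ≠ [] ∧ u ≠ [] ∧ Sim δ Fs w u)}

/-- `C` is an element of 𝒬. -/
def IsClass (δ : Q → A → Set Q) (Fs : Set Q) (C : Set (List A)) : Prop :=
  ∃ w : List A, C = wordClass δ Fs w

/-- Elementwise concatenation of languages of finite words. -/
def mulSet (L M : Set (List A)) : Set (List A) := Set.image2 (· ++ ·) L M

/-- Monoid multiplication of classes: the class of the concatenation of representatives. -/
def classMul (δ : Q → A → Set Q) (Fs : Set Q) (C D : Set (List A)) : Set (List A) :=
  {v | ∃ w ∈ C, ∃ u ∈ D, v ∈ wordClass δ Fs (w ++ u)}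

/-- Finite star of a language. -/
def starSet (L : Set (List A)) : Set (List A) :=
  {w | ∃ l : List (List A), (∀ u ∈ l, u ∈ L) ∧ w = l.flatten}

/-- Possibly infinite words over `A` : Σ^{≤ω}, as stable `Option`-valued streams. -/
def Word (A : Type*) : Type _ := {g : ℕ → Option A // ∀ n, g n = none → g (n + 1) = none}

/-- A finite word as an element of Σ^{≤ω}. -/
def ofList (w : List A) : Word A :=
  ⟨fun n => w[n]?, fun n h => by
    rw [List.getElem?_eq_none_iff] at *
    omega⟩

/-- An infinite word as an element of Σ^{≤ω}. -/
def ofStream (s : ℕ → A) : Word A := ⟨fun n => some (s n), fun n h => by simp at h⟩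

/- The (possibly infinite) concatenation `f 0 · f 1 · f 2 ⋯` of a sequence of finite
words, as an element of Σ^{≤ω}. -/
open Classical in
noncomputable def prodWord (f : ℕ → List A) : Word A :=
  ⟨fun n =>
    if h : ∃ k, n < ((List.range k).flatMap f).length then
      ((List.range h.choose).flatMap f)[n]?
    else none, by
    intro n hn
    dsimp only at hn ⊢
    by_cases h : ∃ k, n < ((List.range k).flatMap f).length
    · exfalso
      rw [dif_pos h, List.getElem?_eq_none_iff] at hn
      have := h.choose_spec
      omega
    · have h2 : ¬ ∃ k, n + 1 < ((List.range k).flatMap f).length := by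
        push_neg at h ⊢
        intro k
        have := h k
        omega
      rw [dif_neg h2]⟩

/-- Concatenation of a finite word with a possibly infinite word. -/
def catWord (u : List A) (w : Word A) : Word A :=
  ⟨fun n => if n < u.length then u[n]? else w.1 (n - u.length), by
    intro n hn
    dsimp only at hn ⊢
    by_cases h : n < u.length
    · exfalso
      rw [if_pos h, List.getElem?_eq_none_iff] at hn
      omega
    · rw [if_neg h] at hn
      have h2 : ¬ n + 1 < u.length := by omega
      rw [if_neg h2]
      have h3 : n + 1 - u.length = (n - u.length) + 1 := by omega
      rw [h3]
      exact w.2 _ hn⟩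

/-- `CD^ω` : all words `w₀w₁w₂⋯` with `w₀ ∈ C` and `wᵢ ∈ D` for `i ≥ 1`. -/
def omegaProd (C D : Set (List A)) : Set (Word A) :=
  {w | ∃ f : ℕ → List A, f 0 ∈ C ∧ (∀ i, 1 ≤ i → f i ∈ D) ∧ w = prodWord f}

/-- `L^ω` : all words `w₁w₂w₃⋯` with all `wᵢ ∈ L`. -/
def omegaPow (L : Set (List A)) : Set (Word A) :=
  {w | ∃ f : ℕ → List A, (∀ i, f i ∈ L) ∧ w = prodWord f}

/-- Acceptance of a finite word (as an NFA). -/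
def NFAAccepts (δ : Q → A → Set Q) (q0 : Q) (Fs : Set Q) (w : List A) : Prop :=
  ∃ q ∈ Fs, Reach δ q0 w q

/-- Büchi acceptance of an infinite word: a run from `q0` visiting `Fs` infinitely often. -/
def BuchiAccepts (δ : Q → A → Set Q) (q0 : Q) (Fs : Set Q) (s : ℕ → A) : Prop :=
  ∃ r : ℕ → Q, r 0 = q0 ∧ (∀ n, r (n + 1) ∈ δ (r n) (s n)) ∧ {n | r n ∈ Fs}.Infinite

/-- The language `L(𝔄) ⊆ Σ^{≤ω}` of the extended Büchi automaton: finite words accepted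
as an NFA together with infinite words accepted as a Büchi automaton. -/
def LangOf (δ : Q → A → Set Q) (q0 : Q) (Fs : Set Q) : Set (Word A) :=
  {w | (∃ l : List A, w = ofList l ∧ NFAAccepts δ q0 Fs l) ∨
       (∃ s : ℕ → A, w = ofStream s ∧ BuchiAccepts δ q0 Fs s)}

/-- The set 𝒬 of classes, as a type. -/
def QClass (δ : Q → A → Set Q) (Fs : Set Q) : Type _ := {C : Set (List A) // IsClass δ Fs C}

/-- The set 𝓒 of pairs `(C, D)` of classes with `CD = C` and `DD = D`, as a type. -/
def CPair (δ : Q → A → Set Q) (Fs : Set Q) : Type _ :=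
  {p : Set (List A) × Set (List A) //
    IsClass δ Fs p.1 ∧ IsClass δ Fs p.2 ∧
    classMul δ Fs p.1 p.2 = p.1 ∧ classMul δ Fs p.2 p.2 = p.2}

/-- The language `CD^ω` denoted by an element of 𝓒. -/
def concPair {δ : Q → A → Set Q} {Fs : Set Q} (p : CPair δ Fs) : Set (Word A) :=
  omegaProd p.1.1 p.1.2

/-- A subset 𝒱 ⊆ 𝓒 is closed: whenever `UV^ω ∩ CD^ω ≠ ∅` for `(C,D) ∈ 𝒱` and
`(U,V) ∈ 𝓒`, then `(U,V) ∈ 𝒱`. -/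
def IsClosedC {δ : Q → A → Set Q} {Fs : Set Q} (𝒱 : Set (CPair δ Fs)) : Prop :=
  ∀ p ∈ 𝒱, ∀ q : CPair δ Fs, (concPair q ∩ concPair p).Nonempty → q ∈ 𝒱

/-- Pre-abstraction 𝔣. -/
def frakF (δ : Q → A → Set Q) (Fs : Set Q) (V : Set (Word A)) : Set (CPair δ Fs) :=
  {p | (concPair p ∩ V).Nonempty}

/-- Pre-concretization 𝔤. -/
def frakG {δ : Q → A → Set Q} {Fs : Set Q} (𝒱 : Set (CPair δ Fs)) : Set (Word A) :=
  ⋃ p ∈ 𝒱, concPair p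

/-- Closure 𝔠(𝒱) = ⋃_{n ≥ 1} (𝔣 ∘ 𝔤)ⁿ(𝒱). -/
def frakC {δ : Q → A → Set Q} {Fs : Set Q} (𝒱 : Set (CPair δ Fs)) : Set (CPair δ Fs) :=
  ⋃ n : ℕ, (fun 𝒲 => frakF δ Fs (frakG 𝒲))^[n + 1] 𝒱

/-- Abstraction α_* -/
def alphaStar (δ : Q → A → Set Q) (Fs : Set Q) (U : Set (List A)) : Set (QClass δ Fs) :=
  {C | (C.1 ∩ U).Nonempty}

/-- Concretization γ_* -/
def gammaStar {δ : Q → A → Set Q} {Fs : Set Q} (𝒰 : Set (QClass δ Fs)) : Set (List A) :=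
  ⋃ C ∈ 𝒰, C.1

/-- Abstraction α_{≤ω}. -/
def alphaOmega (δ : Q → A → Set Q) (Fs : Set Q) (V : Set (Word A)) : Set (CPair δ Fs) :=
  frakC (frakF δ Fs V)

/-- Concretization γ_{≤ω}. -/
def gammaOmega {δ : Q → A → Set Q} {Fs : Set Q} (𝒱 : Set (CPair δ Fs)) : Set (Word A) :=
  frakG 𝒱

section AuxLemmas
variable {δ : Q → A → Set Q} {Fs : Set Q}


theorem reach_append {p q : Q} (x y : List A) :
    Reach δ p (x ++ y) q ↔ ∃ r, Reach δ p x r ∧ Reach δ r y q := by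
  induction x generalizing p with
  | nil => simp [Reach]
  | cons a x ih =>
    simp only [List.cons_append, Reach, List.append_eq, ih]
    tauto

theorem reachF_append {p q : Q} (x y : List A) :
    ReachF δ Fs p (x ++ y) q ↔
      (∃ r, ReachF δ Fs p x r ∧ Reach δ r y q) ∨
      (∃ r, Reach δ p x r ∧ ReachF δ Fs r y q) := by
  constructor
  · rintro ⟨u, v, r, huv, hr, h1, h2⟩
    rcases List.append_eq_append_iff.1 huv with ⟨t, rfl, rfl⟩ | ⟨t, rfl, rfl⟩
    · obtain ⟨s, hs1, hs2⟩ := (reach_append x t).1 h1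
      exact Or.inr ⟨s, hs1, t, v, r, rfl, hr, hs2, h2⟩
    · obtain ⟨s, hs1, hs2⟩ := (reach_append t y).1 h2
      exact Or.inl ⟨s, ⟨u, t, r, rfl, hr, h1, hs1⟩, hs2⟩
  · rintro (⟨r, ⟨u, v, s, rfl, hs, h1, h2⟩, h3⟩ | ⟨r, h1, ⟨u, v, s, rfl, hs, h2, h3⟩⟩)
    · exact ⟨u, v ++ y, s, by simp, hs, h1, (reach_append v y).2 ⟨r, h2, h3⟩⟩
    · exact ⟨x ++ u, v, s, by simp, hs, (reach_append x u).2 ⟨r, h1, h2⟩, h3⟩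

theorem sim_refl (w : List A) : Sim δ Fs w w := fun _ _ => ⟨Iff.rfl, Iff.rfl⟩

theorem sim_symm {w u : List A} (h : Sim δ Fs w u) : Sim δ Fs u w :=
  fun p q => ⟨(h p q).1.symm, (h p q).2.symm⟩

theorem sim_trans {w u v : List A} (h1 : Sim δ Fs w u) (h2 : Sim δ Fs u v) : Sim δ Fs w v :=
  fun p q => ⟨(h1 p q).1.trans (h2 p q).1, (h1 p q).2.trans (h2 p q).2⟩

theorem sim_append {x x' y y' : List A} (hx : Sim δ Fs x x') (hy : Sim δ Fs y y') :
    Sim δ Fs (x ++ y) (x' ++ y') := by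
  intro p q
  constructor
  · rw [reach_append, reach_append]
    exact exists_congr fun r => and_congr ((hx p r).1) ((hy r q).1)
  · rw [reachF_append, reachF_append]
    exact or_congr
      (exists_congr fun r => and_congr ((hx p r).2) ((hy r q).1))
      (exists_congr fun r => and_congr ((hx p r).1) ((hy r q).2))

theorem mem_wordClass_self (w : List A) : w ∈ wordClass δ Fs w := by
  by_cases h : w = [] <;> simp [wordClass, h, sim_refl]

theorem wordClass_eq_of_mem {w u : List A} (h : u ∈ wordClass δ Fs w) :
    wordClass δ Fs u = wordClass δ Fs w := by
  ext v
  simp only [wordClass, Set.mem_setOf_eq] at h ⊢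
  rcases h with ⟨rfl, rfl⟩ | ⟨hw, hu, hs⟩
  · rfl
  · constructor
    · rintro (⟨rfl, rfl⟩ | ⟨_, hv, hs2⟩)
      · exact absurd rfl hu
      · exact Or.inr ⟨hw, hv, sim_trans hs hs2⟩
    · rintro (⟨rfl, rfl⟩ | ⟨_, hv, hs2⟩)
      · exact absurd rfl hw
      · exact Or.inr ⟨hu, hv, sim_trans (sim_symm hs) hs2⟩

theorem wordClass_append_mem {w u w' u' : List A} (hw : w' ∈ wordClass δ Fs w)
    (hu : u' ∈ wordClass δ Fs u) : w' ++ u' ∈ wordClass δ Fs (w ++ u) := by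
  simp only [wordClass, Set.mem_setOf_eq] at *
  rcases hw with ⟨rfl, rfl⟩ | ⟨hw1, hw2, hws⟩ <;> rcases hu with ⟨rfl, rfl⟩ | ⟨hu1, hu2, hus⟩
  · exact Or.inl ⟨rfl, rfl⟩
  · simp only [List.nil_append]; exact Or.inr ⟨hu1, hu2, hus⟩
  · simp only [List.append_nil]; exact Or.inr ⟨hw1, hw2, hws⟩
  · exact Or.inr ⟨by simp [hw1], by simp [hw2], sim_append hws hus⟩

theorem classMul_wordClass (w u : List A) :
    classMul δ Fs (wordClass δ Fs w) (wordClass δ Fs u) = wordClass δ Fs (w ++ u) := by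
  ext v
  constructor
  · rintro ⟨w', hw', u', hu', hv⟩
    rw [wordClass_eq_of_mem (wordClass_append_mem hw' hu')] at hv
    exact hv
  · intro hv
    exact ⟨w, mem_wordClass_self w, u, mem_wordClass_self u, hv⟩

theorem isClass_rep {C : Set (List A)} (hC : IsClass δ Fs C) {x : List A} (hx : x ∈ C) :
    C = wordClass δ Fs x := by
  obtain ⟨t, rfl⟩ := hC
  exact (wordClass_eq_of_mem hx).symm

theorem flatMap_range_mem {U V : Set (List A)} (hUV : classMul δ Fs U V = U)
    {f : ℕ → List A} (h0 : f 0 ∈ U) (hV : ∀ i, 1 ≤ i → f i ∈ V) (m : ℕ) :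
    (List.range (m + 1)).flatMap f ∈ U := by
  induction m with
  | zero => simpa [List.range_succ] using h0
  | succ m ih =>
    rw [List.range_succ, List.flatMap_append, ← hUV]
    refine ⟨_, ih, f (m + 1), hV _ (by omega), ?_⟩
    simp only [List.flatMap_cons, List.flatMap_nil, List.append_nil]
    exact mem_wordClass_self _

open Classical in
theorem word_ext {x y : Word A} (h : ∀ n, x.1 n = y.1 n) : x = y := Subtype.ext (funext h)

theorem catWord_apply (u : List A) (w : Word A) (n : ℕ) :
    (catWord u w).1 n = if n < u.length then u[n]? else w.1 (n - u.length) := rfl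

open Classical in
theorem prodWord_apply (f : ℕ → List A) (n : ℕ) :
    (prodWord f).1 n = if h : ∃ k, n < ((List.range k).flatMap f).length
      then ((List.range h.choose).flatMap f)[n]? else none := rfl

theorem catWord_nil (w : Word A) : catWord [] w = w := word_ext fun n => by
  simp [catWord_apply]

theorem catWord_assoc (u v : List A) (w : Word A) :
    catWord (u ++ v) w = catWord u (catWord v w) := by
  apply word_ext; intro n
  simp only [catWord_apply, List.length_append]
  by_cases h1 : n < u.length
  · have h0 : n < u.length + v.length := by omega
    rw [if_pos h0, if_pos h1, List.getElem?_append, if_pos h1]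
  · rw [if_neg h1]
    by_cases h2 : n < u.length + v.length
    · have h3 : n - u.length < v.length := by omega
      rw [if_pos h2, if_pos h3, List.getElem?_append, if_neg h1]
    · have h3 : ¬ n - u.length < v.length := by omega
      have h4 : n - (u.length + v.length) = n - u.length - v.length := by omega
      rw [if_neg h2, if_neg h3, h4]

theorem catWord_cancel {u : List A} {x y : Word A} (h : catWord u x = catWord u y) : x = y := by
  apply word_ext; intro n
  have h1 := congrArg (fun z : Word A => z.1 (u.length + n)) h
  have h2 : ¬ u.length + n < u.length := by omega
  simpa only [catWord_apply, if_neg h2, Nat.add_sub_cancel_left] using h1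

theorem flatMap_range_prefix (f : ℕ → List A) {j k : ℕ} (h : j ≤ k) :
    ∃ t, (List.range k).flatMap f = (List.range j).flatMap f ++ t := by
  obtain ⟨m, rfl⟩ := Nat.exists_eq_add_of_le h
  rw [List.range_add, List.flatMap_append]
  exact ⟨_, rfl⟩

theorem prodWord_apply_of_lt (f : ℕ → List A) {n k : ℕ}
    (h : n < ((List.range k).flatMap f).length) :
    (prodWord f).1 n = ((List.range k).flatMap f)[n]? := by
  have he : ∃ k, n < ((List.range k).flatMap f).length := ⟨k, h⟩
  rw [prodWord_apply, dif_pos he]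
  have hc := he.choose_spec
  rcases le_total he.choose k with hle | hle
  · obtain ⟨t, ht⟩ := flatMap_range_prefix f hle
    rw [ht, List.getElem?_append, if_pos hc]
  · obtain ⟨t, ht⟩ := flatMap_range_prefix f hle
    rw [ht, List.getElem?_append, if_pos h]

theorem prodWord_apply_of_ge (f : ℕ → List A) {n : ℕ}
    (h : ∀ k, ¬ n < ((List.range k).flatMap f).length) :
    (prodWord f).1 n = none := by
  rw [prodWord_apply, dif_neg (fun ⟨k, hk⟩ => h k hk)]

theorem flatMap_range_succ_left (f : ℕ → List A) (k : ℕ) :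
    (List.range (k + 1)).flatMap f = f 0 ++ (List.range k).flatMap (fun i => f (i + 1)) := by
  rw [List.range_succ_eq_map, List.flatMap_cons, List.flatMap_map]

theorem prodWord_succ (f : ℕ → List A) :
    prodWord f = catWord (f 0) (prodWord fun i => f (i + 1)) := by
  apply word_ext; intro n
  by_cases h1 : n < (f 0).length
  · have h2 : n < ((List.range 1).flatMap f).length := by
      rw [flatMap_range_succ_left]; simp [h1]
    rw [prodWord_apply_of_lt f h2, catWord_apply, if_pos h1, flatMap_range_succ_left]
    rw [List.getElem?_append, if_pos h1]
  · rw [catWord_apply, if_neg h1]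
    by_cases h2 : ∃ k, n - (f 0).length < ((List.range k).flatMap (fun i => f (i + 1))).length
    · obtain ⟨k, hk⟩ := h2
      have hlen : ((List.range (k + 1)).flatMap f).length
          = (f 0).length + ((List.range k).flatMap (fun i => f (i + 1))).length := by
        rw [flatMap_range_succ_left, List.length_append]
      have h3 : n < ((List.range (k + 1)).flatMap f).length := by omega
      rw [prodWord_apply_of_lt f h3, prodWord_apply_of_lt (fun i => f (i + 1)) hk,
        flatMap_range_succ_left, List.getElem?_append, if_neg h1]
    · push_neg at h2
      have ha : ∀ k, ¬ n - (f 0).length < ((List.range k).flatMap (fun i => f (i + 1))).length :=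
        fun k => by have := h2 k; omega
      have hb : ∀ k, ¬ n < ((List.range k).flatMap f).length := by
        intro k
        cases k with
        | zero => simp
        | succ m =>
          rw [flatMap_range_succ_left, List.length_append]
          have := h2 m; omega
      rw [prodWord_apply_of_ge f hb, prodWord_apply_of_ge (fun i => f (i + 1)) ha]

theorem prodWord_shift (f : ℕ → List A) (m : ℕ) :
    prodWord f = catWord ((List.range m).flatMap f) (prodWord fun i => f (m + i)) := by
  induction m with
  | zero =>
    have h : (fun i => f (0 + i)) = f := funext fun i => by rw [Nat.zero_add]
    simp [List.range_zero, List.flatMap_nil, catWord_nil, h]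
  | succ m ih =>
    rw [ih, List.range_succ, List.flatMap_append, catWord_assoc]
    congr 1
    rw [prodWord_succ (fun i => f (m + i))]
    simp only [List.flatMap_cons, List.flatMap_nil, List.append_nil, Nat.add_zero]
    have hfe : (fun i => f (m + (i + 1))) = fun i => f (m + 1 + i) :=
      funext fun i => by congr 1; omega
    rw [hfe]

theorem eq_append_of_catWord_eq {x y : List A} {X Y : Word A}
    (h : catWord x X = catWord y Y) (hl : x.length ≤ y.length) :
    ∃ t, y = x ++ t := by
  refine ⟨y.drop x.length, ?_⟩
  have hx : x = y.take x.length := by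
    apply List.ext_getElem (by simp [hl])
    intro n h1 h2
    have h3 := congrArg (fun z : Word A => z.1 n) h
    simp only [catWord_apply] at h3
    rw [if_pos h1, if_pos (by omega)] at h3
    rw [List.getElem_take]
    rw [List.getElem?_eq_getElem h1, List.getElem?_eq_getElem (by omega : n < y.length)] at h3
    exact Option.some.inj h3
  nth_rewrite 1 [← List.take_append_drop x.length y]
  rw [← hx]

end AuxLemmas

/-- if `𝒰 ∈ 𝒫(𝒬)` and `𝒱 ⊆ 𝓒` is closed then
`𝒰·𝒱 = {(A·C, D) | A ∈ 𝒰, (C,D) ∈ 𝒱}` is closed. -/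
theorem scale_closed {Q A : Type*} [Finite Q] [Finite A]
    (δ : Q → A → Set Q) (Fs : Set Q)
    (𝒰 : Set (QClass δ Fs)) (𝒱 : Set (CPair δ Fs)) (h : IsClosedC 𝒱) :
    IsClosedC {p : CPair δ Fs | ∃ Ac ∈ 𝒰, ∃ q ∈ 𝒱,
      p.1.1 = classMul δ Fs Ac.1 q.1.1 ∧ p.1.2 = q.1.2} := by
  rintro p ⟨Ac, hAc, qv, hqv, hp1, hp2⟩ q ⟨w, hwq, hwp⟩
  obtain ⟨f, hf0, hfV, rfl⟩ := hwq
  obtain ⟨g, hg0, hgD, hw⟩ := hwp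
  rw [hp1] at hg0
  rw [hp2] at hgD
  obtain ⟨a, ha⟩ := Ac.2
  obtain ⟨c, hc⟩ := qv.2.1
  have hU : IsClass δ Fs q.1.1 := q.2.1
  have hVcl : IsClass δ Fs q.1.2 := q.2.2.1
  have hUV : classMul δ Fs q.1.1 q.1.2 = q.1.1 := q.2.2.2.1
  have hVV : classMul δ Fs q.1.2 q.1.2 = q.1.2 := q.2.2.2.2
  -- find an index m0 such that the first m0 blocks of f cover g 0
  have hex : ∃ m, (g 0).length ≤ ((List.range m).flatMap f).length := by
    by_contra hno
    push_neg at hno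
    have h00 : 0 < (g 0).length := by
      have := hno 0
      simpa using this
    have hfn : (prodWord f).1 ((g 0).length - 1) = none :=
      prodWord_apply_of_ge f (fun k => by have := hno k; omega)
    have hr1 : (List.range 1).flatMap g = g 0 := by
      simp [List.range_succ]
    have hg1 : (g 0).length - 1 < ((List.range 1).flatMap g).length := by
      rw [hr1]; omega
    have hgn : (prodWord g).1 ((g 0).length - 1) = ((List.range 1).flatMap g)[(g 0).length - 1]? :=
      prodWord_apply_of_lt g hg1
    rw [← hw, hfn, hr1] at hgn
    rw [List.getElem?_eq_getElem (by omega)] at hgn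
    exact Option.some_ne_none _ hgn.symm
  obtain ⟨m0, hm0⟩ := hex
  set M := m0 + 1 with hM
  set F : List A := (List.range M).flatMap f with hF
  have hFlen : (g 0).length ≤ F.length := by
    obtain ⟨t, ht⟩ := flatMap_range_prefix f (Nat.le_succ m0)
    rw [hF, hM, ht, List.length_append]
    omega
  have hFU : F ∈ q.1.1 := flatMap_range_mem hUV hf0 hfV m0
  have hwf : prodWord f = catWord F (prodWord fun i => f (M + i)) := prodWord_shift f M
  have hr1 : (List.range 1).flatMap g = g 0 := by simp [List.range_succ]
  have hwg : prodWord g = catWord (g 0) (prodWord fun i => g (1 + i)) := by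
    have := prodWord_shift g 1
    rwa [hr1] at this
  have hkey : catWord (g 0) (prodWord fun i => g (1 + i))
      = catWord F (prodWord fun i => f (M + i)) :=
    hwg.symm.trans (hw.symm.trans hwf)
  obtain ⟨c', hc'⟩ := eq_append_of_catWord_eq hkey hFlen
  have hT : (prodWord fun i => g (1 + i)) = catWord c' (prodWord fun i => f (M + i)) := by
    apply catWord_cancel (u := g 0)
    rw [hkey, hc', catWord_assoc]
  -- the witness word z = c · g1 g2 ⋯
  set z : Word A := catWord c (prodWord fun i => g (1 + i)) with hz
  have hcC : c ∈ qv.1.1 := hc ▸ mem_wordClass_self c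
  have hz1 : z ∈ concPair qv := by
    refine ⟨fun i => if i = 0 then c else g i, by simpa using hcC, fun i hi => ?_, ?_⟩
    · have : i ≠ 0 := by omega
      simpa [this] using hgD i hi
    · rw [prodWord_succ]
      beta_reduce
      rw [if_pos rfl]
      have hfe : (fun i => if i + 1 = 0 then c else g (i + 1)) = fun i => g (1 + i) := by
        funext i
        rw [if_neg (Nat.succ_ne_zero i)]
        congr 1
        omega
      rw [hfe]
  set C3 : Set (List A) := wordClass δ Fs (c ++ (c' ++ f M)) with hC3
  have hfMV : f M ∈ q.1.2 := hfV M (by omega)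
  have hV_eq : q.1.2 = wordClass δ Fs (f M) := isClass_rep hVcl hfMV
  have hz2 : z ∈ omegaProd C3 q.1.2 := by
    refine ⟨fun i => if i = 0 then c ++ (c' ++ f M) else f (M + i),
      by simpa using mem_wordClass_self _, fun i hi => ?_, ?_⟩
    · have hne : i ≠ 0 := by omega
      simp only [hne, reduceIte, if_neg]
      exact hfV (M + i) (by omega)
    · rw [prodWord_succ]
      beta_reduce
      rw [if_pos rfl]
      have hfe : (fun i => if i + 1 = 0 then c ++ (c' ++ f M) else f (M + (i + 1)))
          = fun i => f (M + 1 + i) := by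
        funext i
        rw [if_neg (Nat.succ_ne_zero i)]
        congr 1
        omega
      rw [hfe, hz, hT, prodWord_succ (fun i => f (M + i))]
      beta_reduce
      rw [Nat.add_zero]
      have hfe2 : (fun i => f (M + (i + 1))) = fun i => f (M + 1 + i) := by
        funext i; congr 1; omega
      rw [hfe2, catWord_assoc, catWord_assoc]
  have hff : wordClass δ Fs (f M ++ f M) = wordClass δ Fs (f M) := by
    rw [← classMul_wordClass, ← hV_eq, hVV, hV_eq]
  have hC3V : classMul δ Fs C3 q.1.2 = C3 := by
    rw [hV_eq, hC3, classMul_wordClass]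
    calc wordClass δ Fs ((c ++ (c' ++ f M)) ++ f M)
        = classMul δ Fs (wordClass δ Fs (c ++ c')) (wordClass δ Fs (f M ++ f M)) := by
          rw [classMul_wordClass]; congr 1; simp [List.append_assoc]
      _ = classMul δ Fs (wordClass δ Fs (c ++ c')) (wordClass δ Fs (f M)) := by rw [hff]
      _ = wordClass δ Fs ((c ++ c') ++ f M) := classMul_wordClass _ _
      _ = wordClass δ Fs (c ++ (c' ++ f M)) := by rw [List.append_assoc]
  set qC : CPair δ Fs := ⟨(C3, q.1.2), ⟨_, rfl⟩, hVcl, hC3V, hVV⟩ with hqC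
  have hqCV : qC ∈ 𝒱 := h qv hqv qC ⟨z, hz2, hz1⟩
  refine ⟨Ac, hAc, qC, hqCV, ?_, rfl⟩
  have hg0' : g 0 ∈ wordClass δ Fs (a ++ c) := by
    rw [← classMul_wordClass, ← ha, ← hc]
    exact hg0
  have hFfM : F ++ f M ∈ q.1.1 := by
    rw [← hUV]
    exact ⟨F, hFU, f M, hfMV, mem_wordClass_self _⟩
  have hU1 : q.1.1 = wordClass δ Fs (F ++ f M) := isClass_rep hU hFfM
  show q.1.1 = classMul δ Fs Ac.1 C3
  rw [hU1, hc', ha, hC3, classMul_wordClass]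
  calc wordClass δ Fs ((g 0 ++ c') ++ f M)
      = classMul δ Fs (wordClass δ Fs (g 0)) (wordClass δ Fs (c' ++ f M)) := by
        rw [classMul_wordClass, List.append_assoc]
    _ = classMul δ Fs (wordClass δ Fs (a ++ c)) (wordClass δ Fs (c' ++ f M)) := by
        rw [wordClass_eq_of_mem hg0']
    _ = wordClass δ Fs ((a ++ c) ++ (c' ++ f M)) := classMul_wordClass _ _
    _ = wordClass δ Fs (a ++ (c ++ (c' ++ f M))) := by rw [List.append_assoc]
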